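/- arXiv:2402.07077 — 3 statements merged into one kernel-verified Lean document; each statement's English description precedes it below -/
import Mathlib

section
/- For f(x) = (e^{1/(x−1)} − 1)·e^{−e^{1/(x−1)}/x} on (0,1), one has f′(x) < 0 for all x ∈ (0,1), and f′(x) → 0 as x → 0⁺ and as x → 1⁻; consequently sup_{(0,1)} |f′| < ∞. -/
open Set Filter
open scoped Topology

noncomputable section

/-- The transition profile of the cutoff function `I₀` on `(0,1)`. -/
def fprof : ℝ → ℝ := fun x =>
  (Real.exp (1 / (x - 1)) - 1) * Real.exp (-(Real.exp (1 / (x - 1))) / x)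

def uu (x : ℝ) : ℝ := Real.exp (1/(x-1))
def BB (x : ℝ) : ℝ := (uu x - 1)*(x^2 - x + 1) - x^2
def GG (x : ℝ) : ℝ := uu x * Real.exp (-(uu x)/x) * BB x / (x^2 * (x-1)^2)

lemma hasDerivAt_fprof {x : ℝ} (h0 : x ≠ 0) (h1 : x ≠ 1) :
    HasDerivAt fprof (GG x) x := by
  have hx1 : x - 1 ≠ 0 := sub_ne_zero.2 h1
  have hin : HasDerivAt (fun x : ℝ => 1/(x-1)) (-1/(x-1)^2) x := by
    simpa [one_div] using ((hasDerivAt_id x).sub_const 1).fun_inv hx1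
  have hu : HasDerivAt uu (Real.exp (1/(x-1)) * (-1/(x-1)^2)) x := by
    unfold uu
    simpa [mul_comm] using hin.exp
  have hv : HasDerivAt (fun x => -(uu x)/x)
      (((-(Real.exp (1/(x-1)) * (-1/(x-1)^2))) * x - (-(uu x)) * 1) / x^2) x :=
    (hu.neg).div (hasDerivAt_id x) h0
  have h : HasDerivAt (fun y => (uu y - 1) * Real.exp (-(uu y)/y)) _ x :=
    (hu.sub_const 1).fun_mul hv.exp
  have hfun : fprof = fun x => (uu x - 1) * Real.exp (-(uu x)/x) := by
    funext y; simp [fprof, uu]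
  rw [hfun]
  convert h using 1
  simp only [GG, BB, uu]
  field_simp
  ring

lemma deriv_fprof_eq {x : ℝ} (h0 : x ≠ 0) (h1 : x ≠ 1) : deriv fprof x = GG x :=
  (hasDerivAt_fprof h0 h1).deriv

lemma GG_neg {x : ℝ} (hx : x ∈ Set.Ioo (0:ℝ) 1) : GG x < 0 := by
  obtain ⟨hx0, hx1⟩ := hx
  have hu0 : 0 < uu x := Real.exp_pos _
  have hu1 : uu x < 1 := Real.exp_lt_one_iff.2 (div_neg_of_pos_of_neg one_pos (by linarith))
  have hq : 0 < x^2 - x + 1 := by nlinarith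
  have hB : BB x < 0 := by
    have := mul_pos (by linarith : (0:ℝ) < 1 - uu x) hq
    simp only [BB]; nlinarith
  have hden : 0 < x^2 * (x-1)^2 := by
    have h1 : (0:ℝ) < (x-1)^2 := by nlinarith
    have h2 : (0:ℝ) < x^2 := by positivity
    exact mul_pos h2 h1
  exact div_neg_of_neg_of_pos
    (mul_neg_of_pos_of_neg (mul_pos hu0 (Real.exp_pos _)) hB) hden

lemma tsq : Tendsto (fun t : ℝ => t^2 * Real.exp t) atBot (𝓝 0) := by
  have := (Real.tendsto_pow_mul_exp_neg_atTop_nhds_zero 2).comp tendsto_neg_atBot_atTop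
  simpa [Function.comp_def, neg_neg, neg_sq] using this

lemma tendsto_inner_one : Tendsto (fun x : ℝ => 1/(x-1)) (𝓝[<](1:ℝ)) atBot := by
  have h1 : Tendsto (fun x : ℝ => 1 - x) (𝓝[<](1:ℝ)) (𝓝[>](0:ℝ)) := by
    apply tendsto_nhdsWithin_of_tendsto_nhds_of_eventually_within
    · have : Tendsto (fun x : ℝ => 1 - x) (𝓝 (1:ℝ)) (𝓝 (1 - 1)) :=
        (continuous_const.sub continuous_id).continuousAt
      simpa using this.mono_left nhdsWithin_le_nhds
    · filter_upwards [self_mem_nhdsWithin] with x hx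
      exact mem_Ioi.2 (by simp only [mem_Iio] at hx; linarith)
  have h2 : Tendsto (fun x : ℝ => (1 - x)⁻¹) (𝓝[<](1:ℝ)) atTop :=
    tendsto_inv_nhdsGT_zero.comp h1
  have h3 := tendsto_neg_atTop_atBot.comp h2
  refine h3.congr fun x => ?_
  simp only [Function.comp]
  rw [one_div, show (1:ℝ) - x = -(x-1) from by ring, inv_neg, neg_neg]

lemma mem_Ioo_eventually_one : ∀ᶠ x in 𝓝[<](1:ℝ), x ∈ Set.Ioo (0:ℝ) 1 :=
  Ioo_mem_nhdsLT_of_mem (by norm_num : (1:ℝ) ∈ Set.Ioc (0:ℝ) 1)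

lemma mem_Ioo_eventually_zero : ∀ᶠ x in 𝓝[>](0:ℝ), x ∈ Set.Ioo (0:ℝ) 1 :=
  Ioo_mem_nhdsGT_of_mem (by norm_num : (0:ℝ) ∈ Set.Ico (0:ℝ) 1)

lemma tendsto_GG_one : Tendsto GG (𝓝[<](1:ℝ)) (𝓝 0) := by
  have hu : Tendsto uu (𝓝[<](1:ℝ)) (𝓝 0) := Real.tendsto_exp_atBot.comp tendsto_inner_one
  have hx : Tendsto (fun x : ℝ => x) (𝓝[<](1:ℝ)) (𝓝 1) :=
    tendsto_id.mono_left nhdsWithin_le_nhds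
  have h1 : Tendsto (fun x => (1/(x-1))^2 * Real.exp (1/(x-1))) (𝓝[<](1:ℝ)) (𝓝 0) :=
    tsq.comp tendsto_inner_one
  have hB : Tendsto BB (𝓝[<](1:ℝ)) (𝓝 (-2)) := by
    have h : Tendsto BB (𝓝[<](1:ℝ)) (𝓝 ((0 - 1)*(1^2 - 1 + 1) - 1^2)) :=
      ((hu.sub tendsto_const_nhds).mul
        (((hx.pow 2).sub hx).add tendsto_const_nhds)).sub (hx.pow 2)
    norm_num at h; exact h
  have hexp : Tendsto (fun x => Real.exp (-(uu x)/x)) (𝓝[<](1:ℝ)) (𝓝 1) := by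
    have h : Tendsto (fun x => -(uu x)/x) (𝓝[<](1:ℝ)) (𝓝 (-0/1)) := hu.neg.div hx one_ne_zero
    have h' : Tendsto (fun x => -(uu x)/x) (𝓝[<](1:ℝ)) (𝓝 0) := by simpa using h
    have h2 := (Real.continuous_exp.tendsto 0).comp h'
    simpa [Function.comp_def] using h2
  have h2 : Tendsto (fun x => Real.exp (-(uu x)/x) * BB x / x^2) (𝓝[<](1:ℝ))
      (𝓝 (1 * (-2) / 1^2)) := (hexp.mul hB).div (hx.pow 2) (by norm_num)
  have h3 := h1.mul h2
  rw [show (0:ℝ) * (1 * (-2) / 1^2) = 0 by norm_num] at h3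
  refine h3.congr' ?_
  filter_upwards [mem_Ioo_eventually_one] with x hx'
  obtain ⟨hx0, hx1⟩ := hx'
  have h0 : x ≠ 0 := ne_of_gt hx0
  have hx1' : x - 1 ≠ 0 := sub_ne_zero.2 (ne_of_lt hx1)
  simp only [GG, uu]
  field_simp

lemma tendsto_GG_zero : Tendsto GG (𝓝[>](0:ℝ)) (𝓝 0) := by
  have hx : Tendsto (fun x : ℝ => x) (𝓝[>](0:ℝ)) (𝓝 0) :=
    tendsto_id.mono_left nhdsWithin_le_nhds
  have hu : Tendsto uu (𝓝[>](0:ℝ)) (𝓝 (Real.exp (-1))) := by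
    have hc : Tendsto (fun x : ℝ => 1/(x-1)) (𝓝 (0:ℝ)) (𝓝 (1/(0-1))) :=
      ContinuousAt.tendsto (continuousAt_const.div
        ((continuous_id.sub continuous_const).continuousAt) (by norm_num))
    have hc' : Tendsto (fun x : ℝ => 1/(x-1)) (𝓝[>](0:ℝ)) (𝓝 (1/(0-1))) :=
      hc.mono_left nhdsWithin_le_nhds
    have h2 := (Real.continuous_exp.tendsto _).comp hc'
    unfold uu
    simpa [one_div, Function.comp_def] using h2
  have hv : Tendsto (fun x => uu x / x) (𝓝[>](0:ℝ)) atTop := by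
    have hinv : Tendsto (fun x : ℝ => x⁻¹) (𝓝[>](0:ℝ)) atTop := tendsto_inv_nhdsGT_zero
    have h := Tendsto.pos_mul_atTop (Real.exp_pos (-1)) hu hinv
    exact h.congr fun x => (div_eq_mul_inv _ _).symm
  have h1 : Tendsto (fun x => (uu x / x)^2 * Real.exp (-(uu x / x))) (𝓝[>](0:ℝ)) (𝓝 0) :=
    (Real.tendsto_pow_mul_exp_neg_atTop_nhds_zero 2).comp hv
  have hB : Tendsto BB (𝓝[>](0:ℝ)) (𝓝 (Real.exp (-1) - 1)) := by
    have h : Tendsto BB (𝓝[>](0:ℝ))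
        (𝓝 ((Real.exp (-1) - 1)*(0^2 - 0 + 1) - 0^2)) :=
      ((hu.sub tendsto_const_nhds).mul
        (((hx.pow 2).sub hx).add tendsto_const_nhds)).sub (hx.pow 2)
    norm_num at h; exact h
  have hden : Tendsto (fun x => uu x * (x-1)^2) (𝓝[>](0:ℝ))
      (𝓝 (Real.exp (-1) * (0-1)^2)) := hu.mul ((hx.sub tendsto_const_nhds).pow 2)
  have h2 : Tendsto (fun x => BB x / (uu x * (x-1)^2)) (𝓝[>](0:ℝ))
      (𝓝 ((Real.exp (-1) - 1) / (Real.exp (-1) * (0-1)^2))) := by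
    apply hB.div hden
    have := Real.exp_pos (-1); positivity
  have h3 := h1.mul h2
  rw [show (0:ℝ) * ((Real.exp (-1) - 1) / (Real.exp (-1) * (0-1)^2)) = 0 by ring] at h3
  refine h3.congr' ?_
  filter_upwards [mem_Ioo_eventually_zero] with x hx'
  obtain ⟨hx0, hx1⟩ := hx'
  have h0 : x ≠ 0 := ne_of_gt hx0
  have hx1' : x - 1 ≠ 0 := sub_ne_zero.2 (ne_of_lt hx1)
  have hu0 : uu x ≠ 0 := (Real.exp_pos _).ne'
  simp only [GG, neg_div]
  rw [div_pow]
  field_simp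

lemma contGG {x : ℝ} (h0 : x ≠ 0) (h1 : x ≠ 1) : ContinuousAt GG x := by
  have hx1 : x - 1 ≠ 0 := sub_ne_zero.2 h1
  have hcu : ContinuousAt uu x := by
    apply Real.continuous_exp.continuousAt.comp
    exact continuousAt_const.div ((continuous_id.sub continuous_const).continuousAt) hx1
  have hcB : ContinuousAt BB x := by
    apply ContinuousAt.sub
    · exact (hcu.sub continuousAt_const).mul (by fun_prop)
    · fun_prop
  apply ContinuousAt.div
  · exact (hcu.mul (Real.continuous_exp.continuousAt.comp
      (hcu.neg.div continuousAt_id h0))).mul hcB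
  · fun_prop
  · exact mul_ne_zero (pow_ne_zero _ h0) (pow_ne_zero _ hx1)

/-- `fprof′ < 0` on `(0,1)`, `fprof′ → 0` at `0⁺` and at `1⁻`, and consequently
`fprof′` is bounded on `(0,1)`. -/
theorem stmt9 :
    (∀ x ∈ Set.Ioo (0:ℝ) 1, deriv fprof x < 0) ∧
    Tendsto (deriv fprof) (𝓝[>] (0:ℝ)) (𝓝 0) ∧
    Tendsto (deriv fprof) (𝓝[<] (1:ℝ)) (𝓝 0) ∧
    ∃ M : ℝ, ∀ x ∈ Set.Ioo (0:ℝ) 1, |deriv fprof x| ≤ M := by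
  have hder : ∀ x ∈ Set.Ioo (0:ℝ) 1, deriv fprof x = GG x := fun x hx =>
    deriv_fprof_eq (ne_of_gt hx.1) (ne_of_lt hx.2)
  have ht0 : Tendsto (deriv fprof) (𝓝[>] (0:ℝ)) (𝓝 0) := by
    refine tendsto_GG_zero.congr' ?_
    filter_upwards [mem_Ioo_eventually_zero] with x hx using (hder x hx).symm
  have ht1 : Tendsto (deriv fprof) (𝓝[<] (1:ℝ)) (𝓝 0) := by
    refine tendsto_GG_one.congr' ?_
    filter_upwards [mem_Ioo_eventually_one] with x hx using (hder x hx).symm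
  refine ⟨fun x hx => (hder x hx) ▸ GG_neg hx, ht0, ht1, ?_⟩
  -- boundedness
  have e0 : ∀ᶠ x in 𝓝[>](0:ℝ), |deriv fprof x| < 1 := by
    have h := ht0.eventually (eventually_abs_sub_lt 0 one_pos)
    simpa using h
  have e1 : ∀ᶠ x in 𝓝[<](1:ℝ), |deriv fprof x| < 1 := by
    have h := ht1.eventually (eventually_abs_sub_lt 0 one_pos)
    simpa using h
  rw [eventually_nhdsWithin_iff] at e0 e1
  obtain ⟨δ₁, hδ₁, h₁⟩ := Metric.eventually_nhds_iff.1 e0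
  obtain ⟨δ₂, hδ₂, h₂⟩ := Metric.eventually_nhds_iff.1 e1
  set a := min (δ₁/2) (1/2) with ha_def
  set b := max (1 - δ₂/2) (1/2) with hb_def
  have ha0 : 0 < a := by positivity
  have hab : a ≤ b := le_trans (min_le_right _ _) (le_max_right _ _)
  have hb1 : b < 1 := by
    apply max_lt _ (by norm_num)
    linarith
  have hcont : ContinuousOn GG (Set.Icc a b) := by
    intro x hx
    exact (contGG (ne_of_gt (lt_of_lt_of_le ha0 hx.1))
      (ne_of_lt (lt_of_le_of_lt hx.2 hb1))).continuousWithinAt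
  obtain ⟨C, hC⟩ := (isCompact_Icc).exists_bound_of_continuousOn hcont
  refine ⟨max C 1, fun x hx => ?_⟩
  obtain ⟨hx0, hx1⟩ := hx
  rcases lt_or_ge x a with hxa | hxa
  · have : |deriv fprof x| < 1 := by
      apply h₁ _ hx0
      rw [Real.dist_eq, sub_zero, abs_of_pos hx0]
      calc x < a := hxa
        _ ≤ δ₁/2 := min_le_left _ _
        _ < δ₁ := by linarith
    exact le_trans this.le (le_max_right _ _)
  rcases le_or_gt x b with hxb | hxb
  · have := hC x ⟨hxa, hxb⟩
    rw [Real.norm_eq_abs] at this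
    rw [hder x ⟨hx0, hx1⟩]
    exact le_trans this (le_max_left _ _)
  · have : |deriv fprof x| < 1 := by
      apply h₂ _ hx1
      rw [Real.dist_eq]
      have hb' : 1 - δ₂/2 ≤ b := le_max_left _ _
      have : 1 - δ₂/2 < x := lt_of_le_of_lt hb' hxb
      rw [abs_of_neg (by linarith : x - 1 < 0)]
      linarith
    exact le_trans this.le (le_max_right _ _)
end
end

section
/- For f : ℓ² → ℝ bounded and uniformly continuous and t > 0, the inf-convolution satisfies f − w_f(2√(t·sup|f|)) ≤ U_t f ≤ f on ℓ². -/
open MeasureTheory Metric Complex Set Bornology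
open scoped ENNReal NNReal Real

noncomputable section

abbrev l2 : Type := lp (fun _ : ℕ => ℂ) 2

/-- The Lasry–Lions inf-convolution `(U_t f)(z) = inf_ζ { f(ζ) + ‖z − ζ‖²/(2t) }`. -/
def infConv (f : l2 → ℝ) (t : ℝ) (z : l2) : ℝ :=
  ⨅ ζ : l2, (f ζ + ‖z - ζ‖ ^ 2 / (2 * t))

/-- The modulus of continuity `w_f(s) = sup { |f(z) − f(w)| : ‖z − w‖ ≤ s }`. -/
def modulus (f : l2 → ℝ) (s : ℝ) : ℝ :=
  sSup {d : ℝ | ∃ z w : l2, ‖z - w‖ ≤ s ∧ d = |f z - f w|}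

/-- For `f` bounded and uniformly continuous and `t > 0`,
`f − w_f(2√(t·sup|f|)) ≤ U_t f ≤ f` on ℓ². -/
theorem stmt13 (f : l2 → ℝ) (hb : ∃ M : ℝ, ∀ z : l2, |f z| ≤ M)
    (hu : UniformContinuous f) (t : ℝ) (ht : 0 < t) :
    ∀ z : l2,
      f z - modulus f (2 * Real.sqrt (t * ⨆ w : l2, |f w|)) ≤ infConv f t z ∧
      infConv f t z ≤ f z := by
  obtain ⟨M₀, hM₀⟩ := hb
  set M : ℝ := ⨆ w : l2, |f w| with hM
  have hbdd : BddAbove (Set.range fun w : l2 => |f w|) := ⟨M₀, by rintro x ⟨w, rfl⟩; exact hM₀ w⟩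
  have hMle : ∀ w : l2, |f w| ≤ M := fun w => le_ciSup hbdd w
  have hM0 : 0 ≤ M := le_trans (abs_nonneg _) (hMle 0)
  set s : ℝ := 2 * Real.sqrt (t * M) with hs
  have hs0 : 0 ≤ s := by positivity
  have hSbdd : BddAbove {d : ℝ | ∃ z w : l2, ‖z - w‖ ≤ s ∧ d = |f z - f w|} := by
    refine ⟨2 * M, ?_⟩
    rintro d ⟨z, w, -, rfl⟩
    calc |f z - f w| ≤ |f z| + |f w| := abs_sub _ _
      _ ≤ M + M := add_le_add (hMle z) (hMle w)
      _ = 2 * M := by ring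
  have hmod0 : 0 ≤ modulus f s := by
    refine le_csSup hSbdd ⟨0, 0, by simpa using hs0, by simp⟩
  intro z
  constructor
  · refine le_ciInf fun ζ => ?_
    rcases le_or_gt ‖z - ζ‖ s with h | h
    · have h1 : |f z - f ζ| ≤ modulus f s := le_csSup hSbdd ⟨z, ζ, h, rfl⟩
      have h2 : f z - f ζ ≤ modulus f s := (le_abs_self _).trans h1
      have h3 : 0 ≤ ‖z - ζ‖ ^ 2 / (2 * t) := by positivity
      linarith
    · have hsq : s ^ 2 = 4 * (t * M) := by
        rw [hs, mul_pow, Real.sq_sqrt (by positivity)]; ring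
      have h2 : s ^ 2 ≤ ‖z - ζ‖ ^ 2 := by
        apply pow_le_pow_left₀ hs0 h.le
      have h3 : 2 * M ≤ ‖z - ζ‖ ^ 2 / (2 * t) := by
        rw [le_div_iff₀ (by positivity)]
        nlinarith
      have h4 : f z - f ζ ≤ 2 * M := by
        have := hMle z; have := hMle ζ
        have hz := abs_le.mp (hMle z)
        have hζ := abs_le.mp (hMle ζ)
        linarith
      linarith
  · have : infConv f t z ≤ f z + ‖z - z‖ ^ 2 / (2 * t) := by
      apply ciInf_le
      refine ⟨f z - modulus f s - 2 * M, ?_⟩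
      rintro x ⟨ζ, rfl⟩
      have h3 : 0 ≤ ‖z - ζ‖ ^ 2 / (2 * t) := by positivity
      have hz := abs_le.mp (hMle z)
      have hζ := abs_le.mp (hMle ζ)
      linarith
    simpa using this
end
end

section
/- For f : ℓ² → ℝ bounded and uniformly continuous and t > 0, the function z ↦ (U_t f)(z) − ‖z‖²/(2t) is anti-plurisubharmonic on ℓ², i.e., its negative is plurisubharmonic: for all a, b ∈ ℓ² and r > 0, (U_t f)(a) − ‖a‖²/(2t) ≥ (1/2π)∫₀^{2π} [(U_t f)(a + r e^{iθ} b) − ‖a + r e^{iθ} b‖²/(2t)] dθ. -/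
open MeasureTheory Metric Complex Set Bornology
open scoped ENNReal NNReal Real InnerProductSpace

noncomputable section

lemma bddBelow_aux (f : l2 → ℝ) {M : ℝ} (hM : ∀ z : l2, |f z| ≤ M) (t : ℝ) (ht : 0 < t)
    (z : l2) : BddBelow (Set.range fun ζ : l2 => f ζ + ‖z - ζ‖ ^ 2 / (2 * t)) := by
  refine ⟨-M, ?_⟩
  rintro x ⟨ζ, rfl⟩
  have h1 : -M ≤ f ζ := neg_le_of_abs_le (hM ζ)
  have h2 : 0 ≤ ‖z - ζ‖ ^ 2 / (2 * t) := by positivity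
  linarith

lemma infConv_le (f : l2 → ℝ) {M : ℝ} (hM : ∀ z : l2, |f z| ≤ M) (t : ℝ) (ht : 0 < t)
    (z ζ : l2) : infConv f t z ≤ f ζ + ‖z - ζ‖ ^ 2 / (2 * t) :=
  ciInf_le (bddBelow_aux f hM t ht z) ζ

lemma infConv_continuous (f : l2 → ℝ) {M : ℝ} (hM : ∀ z : l2, |f z| ≤ M)
    (hu : UniformContinuous f) (t : ℝ) (ht : 0 < t) : Continuous (infConv f t) := by
  rw [Metric.continuous_iff]
  intro z ε hε
  obtain ⟨δ, hδ, hf⟩ := Metric.uniformContinuous_iff.mp hu (ε/2) (by linarith)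
  refine ⟨δ, hδ, fun z' hz' => ?_⟩
  have key : ∀ u v : l2, dist u v < δ → infConv f t u ≤ infConv f t v + ε/2 := by
    intro u v huv
    have : infConv f t u - ε/2 ≤ infConv f t v := by
      rw [show infConv f t v = ⨅ ζ : l2, (f ζ + ‖v - ζ‖ ^ 2 / (2 * t)) from rfl,
        le_ciInf_iff (bddBelow_aux f hM t ht v)]
      intro ζ
      have h1 : infConv f t u ≤ f (ζ + (u - v)) + ‖u - (ζ + (u - v))‖ ^ 2 / (2 * t) :=
        infConv_le f hM t ht u _
      have h2 : u - (ζ + (u - v)) = v - ζ := by abel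
      have h3 : dist (ζ + (u - v)) ζ < δ := by
        rw [dist_eq_norm]
        simpa [dist_eq_norm] using huv
      have h4 : |f (ζ + (u - v)) - f ζ| < ε/2 := by
        have := hf h3
        rwa [Real.dist_eq] at this
      rw [h2] at h1
      have := abs_lt.mp h4
      linarith
    linarith
  rw [Real.dist_eq, abs_lt]
  have h1 := key z' z hz'
  have h2 := key z z' (by rwa [dist_comm] at hz')
  constructor <;> linarith

set_option maxHeartbeats 1600000 in
/-- For `f` bounded and uniformly continuous and `t > 0`, the function
`z ↦ (U_t f)(z) − ‖z‖²/(2t)` is anti-plurisubharmonic on ℓ²: it satisfies the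
super-mean-value inequality on every circle. -/
theorem stmt15 (f : l2 → ℝ) (hb : ∃ M : ℝ, ∀ z : l2, |f z| ≤ M)
    (hu : UniformContinuous f) (t : ℝ) (ht : 0 < t) :
    ∀ a b : l2, ∀ r : ℝ, 0 < r →
      (1 / (2 * π)) * ∫ θ in (0:ℝ)..(2 * π),
          (infConv f t (a + ((r : ℂ) * Complex.exp ((θ : ℂ) * Complex.I)) • b) -
            ‖a + ((r : ℂ) * Complex.exp ((θ : ℂ) * Complex.I)) • b‖ ^ 2 / (2 * t)) ≤
        infConv f t a - ‖a‖ ^ 2 / (2 * t) := by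
  obtain ⟨M, hM⟩ := hb
  intro a b r hr
  set z : ℝ → l2 := fun θ => a + ((r : ℂ) * Complex.exp ((θ : ℂ) * Complex.I)) • b with hz
  have hzc : Continuous z := by
    apply continuous_const.add
    exact (Continuous.smul (continuous_const.mul (Complex.continuous_exp.comp
      (Complex.continuous_ofReal.mul continuous_const))) continuous_const)
  set F : l2 → ℝ := fun w => infConv f t w - ‖w‖ ^ 2 / (2 * t) with hF
  have hFc : Continuous F :=
    (infConv_continuous f hM hu t ht).sub
      ((continuous_norm.pow 2).div_const _)
  have hint : IntervalIntegrable (fun θ => F (z θ)) volume 0 (2 * π) :=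
    (hFc.comp hzc).intervalIntegrable _ _
  have hπ : (0:ℝ) < 2 * π := by positivity
  -- main bound per ζ
  have main : ∀ ζ : l2,
      (1 / (2 * π)) * (∫ θ in (0:ℝ)..(2 * π), F (z θ)) + ‖a‖ ^ 2 / (2 * t)
        ≤ f ζ + ‖a - ζ‖ ^ 2 / (2 * t) := by
    intro ζ
    obtain ⟨w, hw⟩ : ∃ w : ℂ, w = ⟪b, ζ⟫_ℂ := ⟨_, rfl⟩
    obtain ⟨C, hC⟩ : ∃ C : ℝ,
        C = f ζ + (‖ζ‖ ^ 2 - 2 * Complex.re ⟪a, ζ⟫_ℂ) / (2 * t) := ⟨_, rfl⟩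
    have hkey : ∀ θ : ℝ, F (z θ) ≤ C - (r * (Real.cos θ * w.re + Real.sin θ * w.im)) / t := by
      intro θ
      have h1 : infConv f t (z θ) ≤ f ζ + ‖z θ - ζ‖ ^ 2 / (2 * t) := infConv_le f hM t ht _ _
      have h2 : ‖z θ - ζ‖ ^ 2 = ‖z θ‖ ^ 2 - 2 * Complex.re ⟪z θ, ζ⟫_ℂ + ‖ζ‖ ^ 2 := by
        have := @norm_sub_sq ℂ l2 _ _ _ (z θ) ζ
        simpa using this
      have h3 : Complex.re ⟪z θ, ζ⟫_ℂ
          = Complex.re ⟪a, ζ⟫_ℂ + r * (Real.cos θ * w.re + Real.sin θ * w.im) := by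
        rw [hz]
        simp only [inner_add_left, inner_smul_left, Complex.add_re]
        congr 1
        rw [hw]
        simp [Complex.exp_mul_I, Complex.mul_re, Complex.mul_im, map_mul,
          Complex.cos_ofReal_re, Complex.sin_ofReal_re]
        ring
      rw [h2, h3] at h1
      simp only [hF]
      rw [hC]
      have ht' : (2 * t : ℝ) ≠ 0 := by positivity
      have ht'' : (t : ℝ) ≠ 0 := ne_of_gt ht
      have e : f ζ + (‖z θ‖ ^ 2 - 2 * ((⟪a, ζ⟫_ℂ).re
            + r * (Real.cos θ * w.re + Real.sin θ * w.im)) + ‖ζ‖ ^ 2) / (2 * t)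
            - ‖z θ‖ ^ 2 / (2 * t)
          = f ζ + (‖ζ‖ ^ 2 - 2 * (⟪a, ζ⟫_ℂ).re) / (2 * t)
            - r * (Real.cos θ * w.re + Real.sin θ * w.im) / t := by
        field_simp
        ring
      linarith [h1, e]
    -- integrate
    have hrhs : IntervalIntegrable
        (fun θ => C - (r * (Real.cos θ * w.re + Real.sin θ * w.im)) / t) volume 0 (2 * π) := by
      exact (continuous_const.sub ((continuous_const.mul ((Real.continuous_cos.mul continuous_const).add
        (Real.continuous_sin.mul continuous_const))).div_const t)).intervalIntegrable _ _
    have hmono : (∫ θ in (0:ℝ)..(2 * π), F (z θ))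
        ≤ ∫ θ in (0:ℝ)..(2 * π), (C - (r * (Real.cos θ * w.re + Real.sin θ * w.im)) / t) := by
      apply intervalIntegral.integral_mono_on (le_of_lt hπ) hint hrhs
      intro θ _; exact hkey θ
    have hval : (∫ θ in (0:ℝ)..(2 * π), (C - (r * (Real.cos θ * w.re + Real.sin θ * w.im)) / t))
        = 2 * π * C := by
      have : (fun θ : ℝ => C - (r * (Real.cos θ * w.re + Real.sin θ * w.im)) / t)
          = fun θ : ℝ => C - ((r * w.re / t) * Real.cos θ + (r * w.im / t) * Real.sin θ) := by
        funext θ; ring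
      rw [this]
      rw [intervalIntegral.integral_sub (intervalIntegrable_const)
        (show IntervalIntegrable (fun θ : ℝ => r * w.re / t * Real.cos θ + r * w.im / t * Real.sin θ)
          volume 0 (2 * π) from ((continuous_const.mul Real.continuous_cos).add
          (continuous_const.mul Real.continuous_sin)).intervalIntegrable _ _)]
      rw [intervalIntegral.integral_add (show IntervalIntegrable (fun θ : ℝ => r * w.re / t * Real.cos θ)
          volume 0 (2 * π) from (continuous_const.mul Real.continuous_cos).intervalIntegrable _ _)
        (show IntervalIntegrable (fun θ : ℝ => r * w.im / t * Real.sin θ)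
          volume 0 (2 * π) from (continuous_const.mul Real.continuous_sin).intervalIntegrable _ _)]
      rw [intervalIntegral.integral_const_mul, intervalIntegral.integral_const_mul,
        integral_cos, integral_sin, intervalIntegral.integral_const]
      simp [Real.sin_two_pi, Real.cos_two_pi]
    have hC2 : C = f ζ + ‖a - ζ‖ ^ 2 / (2 * t) - ‖a‖ ^ 2 / (2 * t) := by
      have h2 : ‖a - ζ‖ ^ 2 = ‖a‖ ^ 2 - 2 * Complex.re ⟪a, ζ⟫_ℂ + ‖ζ‖ ^ 2 := by
        have := @norm_sub_sq ℂ l2 _ _ _ a ζ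
        simpa using this
      rw [hC, h2]; ring
    have h5 : (1 / (2 * π)) * (∫ θ in (0:ℝ)..(2 * π), F (z θ)) ≤ (1 / (2 * π)) * (2 * π * C) :=
      mul_le_mul_of_nonneg_left (hmono.trans_eq hval) (by positivity)
    have h6 : (1 / (2 * π)) * (2 * π * C) = C := by
      field_simp
    rw [h6, hC2] at h5
    linarith
  -- take infimum over ζ
  have final : (1 / (2 * π)) * (∫ θ in (0:ℝ)..(2 * π), F (z θ)) + ‖a‖ ^ 2 / (2 * t)
      ≤ infConv f t a := by
    rw [show infConv f t a = ⨅ ζ : l2, (f ζ + ‖a - ζ‖ ^ 2 / (2 * t)) from rfl,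
      le_ciInf_iff (bddBelow_aux f hM t ht a)]
    exact main
  simp only [hF, hz] at final ⊢
  linarith
end
end
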